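/- (Lemma 2, positivity of the growth rate derivative, stated as strict monotonicity) Let Ω be an LT output degree distribution, r_i ∈ (0,1], r_o ∈ (0,1). Then the growth rate G is strictly increasing on the interval (0, 1/2): for all δ₁, δ₂ with 0 < δ₁ < δ₂ < 1/2 one has G(δ₁) < G(δ₂). -/

import Mathlib

open Finset Filter

/-- Binary entropy function (base-2 logarithms). -/
noncomputable def Hb (x : ℝ) : ℝ := -x * Real.logb 2 x - (1 - x) * Real.logb 2 (1 - x)

/-- `ρ_λ = (1/2)·Σ_{j=1}^{dmax} Ω_j·(1 − (1 − 2λ)^j)`. -/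
noncomputable def rho (dmax : ℕ) (Ω : ℕ → ℝ) (lam : ℝ) : ℝ :=
  (1 / 2) * ∑ j ∈ Finset.Icc 1 dmax, Ω j * (1 - (1 - 2 * lam) ^ j)

open scoped Classical in
/-- The domain `𝒟_λ`: `(0,1)` if `Ω_j = 0` for every even `j`, and `(0,1]` otherwise. -/
noncomputable def Dset (dmax : ℕ) (Ω : ℕ → ℝ) : Set ℝ :=
  if ∀ j ∈ Finset.Icc 1 dmax, Even j → Ω j = 0 then Set.Ioo 0 1 else Set.Ioc 0 1

/-- `f(δ,λ) = r_i·H_b(λ) + δ·log₂ ρ_λ + (1−δ)·log₂(1−ρ_λ)`. -/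
noncomputable def ff (dmax : ℕ) (Ω : ℕ → ℝ) (ri δ lam : ℝ) : ℝ :=
  ri * Hb lam + δ * Real.logb 2 (rho dmax Ω lam) + (1 - δ) * Real.logb 2 (1 - rho dmax Ω lam)

/-- `f_max(δ) = sup_{λ ∈ 𝒟_λ} f(δ,λ)`. -/
noncomputable def fmax (dmax : ℕ) (Ω : ℕ → ℝ) (ri δ : ℝ) : ℝ :=
  sSup (ff dmax Ω ri δ '' Dset dmax Ω)

/-- Growth rate `G(δ) = H_b(δ) − r_i·(1 − r_o) + f_max(δ)`. -/
noncomputable def Gr (dmax : ℕ) (Ω : ℕ → ℝ) (ri ro δ : ℝ) : ℝ :=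
  Hb δ - ri * (1 - ro) + fmax dmax Ω ri δ

/-- Normalized typical minimum distance `δ*`: `0` if `lim_{δ→0⁺} G(δ) ≥ 0`, and
`inf {δ > 0 : G(δ) > 0}` otherwise. -/
noncomputable def deltaStar (dmax : ℕ) (Ω : ℕ → ℝ) (ri ro : ℝ) : ℝ :=
  if 0 ≤ limUnder (nhdsWithin 0 (Set.Ioi 0)) (Gr dmax Ω ri ro) then 0
  else sInf {δ : ℝ | 0 < δ ∧ 0 < Gr dmax Ω ri ro δ}


section AuxLemmas


lemma log2pos : (0:ℝ) < Real.log 2 := Real.log_pos one_lt_two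

lemma Hb_eq (x : ℝ) : Hb x = Real.binEntropy x / Real.log 2 := by
  simp only [Hb, Real.binEntropy, Real.logb, Real.log_inv]
  ring

lemma Hb_one_sub (x : ℝ) : Hb (1 - x) = Hb x := by
  rw [Hb_eq, Hb_eq, Real.binEntropy_one_sub]

lemma Hb_lt_Hb {a b : ℝ} (ha : 0 ≤ a) (hab : a < b) (hb : b ≤ 1/2) : Hb a < Hb b := by
  rw [Hb_eq, Hb_eq, div_lt_div_iff_of_pos_right log2pos]
  exact Real.binEntropy_strictMonoOn ⟨ha, by norm_num; linarith⟩
    ⟨by linarith, by norm_num; linarith⟩ hab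

lemma Hb_le_Hb {a b : ℝ} (ha : 0 ≤ a) (hab : a ≤ b) (hb : b ≤ 1/2) : Hb a ≤ Hb b := by
  rcases eq_or_lt_of_le hab with rfl | h
  · exact le_rfl
  · exact (Hb_lt_Hb ha h hb).le

lemma Hb_le_one (x : ℝ) : Hb x ≤ 1 := by
  rw [Hb_eq, div_le_one log2pos]
  exact Real.binEntropy_le_log_two

lemma gibbs_aux {x p : ℝ} (hx : 0 < x) (hx1 : x < 1) (hp : 0 < p) (hp1 : p < 1) :
    x * Real.log p + (1-x) * Real.log (1-p) ≤ x * Real.log x + (1-x) * Real.log (1-x) := by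
  have h1x : (0:ℝ) < 1 - x := by linarith
  have h1p : (0:ℝ) < 1 - p := by linarith
  have A : x * Real.log p - x * Real.log x ≤ p - x := by
    calc x * Real.log p - x * Real.log x = x * (Real.log p - Real.log x) := by ring
    _ = x * Real.log (p / x) := by rw [Real.log_div hp.ne' hx.ne']
    _ ≤ x * (p / x - 1) := by
        exact mul_le_mul_of_nonneg_left (Real.log_le_sub_one_of_pos (div_pos hp hx)) hx.le
    _ = p - x := by field_simp
  have B : (1-x) * Real.log (1-p) - (1-x) * Real.log (1-x) ≤ x - p := by
    calc (1-x) * Real.log (1-p) - (1-x) * Real.log (1-x)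
        = (1-x) * (Real.log (1-p) - Real.log (1-x)) := by ring
    _ = (1-x) * Real.log ((1-p) / (1-x)) := by rw [Real.log_div h1p.ne' h1x.ne']
    _ ≤ (1-x) * ((1-p) / (1-x) - 1) := by
        exact mul_le_mul_of_nonneg_left (Real.log_le_sub_one_of_pos (div_pos h1p h1x)) h1x.le
    _ = x - p := by field_simp; ring
  linarith

lemma gibbs_aux_strict {x p : ℝ} (hx : 0 < x) (hx1 : x < 1) (hp : 0 < p) (hp1 : p < 1)
    (hne : p ≠ x) :
    x * Real.log p + (1-x) * Real.log (1-p) < x * Real.log x + (1-x) * Real.log (1-x) := by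
  have h1x : (0:ℝ) < 1 - x := by linarith
  have h1p : (0:ℝ) < 1 - p := by linarith
  have A : x * Real.log p - x * Real.log x < p - x := by
    have hne' : p / x ≠ 1 := by
      intro h; exact hne (by field_simp at h; linarith)
    calc x * Real.log p - x * Real.log x = x * Real.log (p / x) := by
          rw [Real.log_div hp.ne' hx.ne']; ring
    _ < x * (p / x - 1) := by
        exact mul_lt_mul_of_pos_left (Real.log_lt_sub_one_of_pos (div_pos hp hx) hne') hx
    _ = p - x := by field_simp
  have B : (1-x) * Real.log (1-p) - (1-x) * Real.log (1-x) ≤ x - p := by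
    calc (1-x) * Real.log (1-p) - (1-x) * Real.log (1-x)
        = (1-x) * Real.log ((1-p) / (1-x)) := by rw [Real.log_div h1p.ne' h1x.ne']; ring
    _ ≤ (1-x) * ((1-p) / (1-x) - 1) := by
        exact mul_le_mul_of_nonneg_left (Real.log_le_sub_one_of_pos (div_pos h1p h1x)) h1x.le
    _ = x - p := by field_simp; ring
  linarith

lemma gibbs {x p : ℝ} (hx : 0 < x) (hx1 : x < 1) (hp : 0 < p) (hp1 : p < 1) :
    Hb x + x * Real.logb 2 p + (1-x) * Real.logb 2 (1-p) ≤ 0 := by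
  have key := gibbs_aux hx hx1 hp hp1
  have h : Hb x + x * Real.logb 2 p + (1-x) * Real.logb 2 (1-p)
      = (x * Real.log p + (1-x) * Real.log (1-p)
          - (x * Real.log x + (1-x) * Real.log (1-x))) / Real.log 2 := by
    simp only [Hb, Real.logb]
    ring
  rw [h]
  exact div_nonpos_of_nonpos_of_nonneg (by linarith) log2pos.le

lemma gibbs_strict {x p : ℝ} (hx : 0 < x) (hx1 : x < 1) (hp : 0 < p) (hp1 : p < 1)
    (hne : p ≠ x) :
    Hb x + x * Real.logb 2 p + (1-x) * Real.logb 2 (1-p) < 0 := by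
  have key := gibbs_aux_strict hx hx1 hp hp1 hne
  have h : Hb x + x * Real.logb 2 p + (1-x) * Real.logb 2 (1-p)
      = (x * Real.log p + (1-x) * Real.log (1-p)
          - (x * Real.log x + (1-x) * Real.log (1-x))) / Real.log 2 := by
    simp only [Hb, Real.logb]
    ring
  rw [h]
  exact div_neg_of_neg_of_pos (by linarith) log2pos

lemma csSup_add_le {S T : Set ℝ} (hS : S.Nonempty) (hT : BddAbove T) (c : ℝ)
    (h : ∀ x ∈ S, ∃ y ∈ T, x + c ≤ y) : sSup S + c ≤ sSup T := by
  have h2 : ∀ x ∈ S, x ≤ sSup T - c := by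
    intro x hx
    obtain ⟨y, hy, hxy⟩ := h x hx
    have := le_csSup hT hy
    linarith
  have := csSup_le hS h2
  linarith

variable {dmax : ℕ} {Ω : ℕ → ℝ}

lemma Dset_subset : Dset dmax Ω ⊆ Set.Ioc 0 1 := by
  unfold Dset; split_ifs
  · exact Set.Ioo_subset_Ioc_self
  · exact subset_rfl

lemma Ioo_subset_Dset : Set.Ioo (0:ℝ) 1 ⊆ Dset dmax Ω := by
  unfold Dset; split_ifs
  · exact subset_rfl
  · exact Set.Ioo_subset_Ioc_self

lemma one_mem_Dset_even (h : (1:ℝ) ∈ Dset dmax Ω)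
    (hΩpos : ∀ j ∈ Finset.Icc 1 dmax, 0 ≤ Ω j) :
    ∃ j ∈ Finset.Icc 1 dmax, Even j ∧ 0 < Ω j := by
  unfold Dset at h
  split_ifs at h with hif
  · exact absurd h.2 (lt_irrefl 1)
  · push_neg at hif
    obtain ⟨j, hj, he, hne⟩ := hif
    exact ⟨j, hj, he, lt_of_le_of_ne (hΩpos j hj) (Ne.symm hne)⟩

lemma pow_le_one_abs {x : ℝ} (h : |x| ≤ 1) (j : ℕ) : x ^ j ≤ 1 := by
  calc x ^ j ≤ |x ^ j| := le_abs_self _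
  _ = |x| ^ j := abs_pow x j
  _ ≤ 1 := pow_le_one₀ (abs_nonneg _) h

lemma rho_nonneg {lam : ℝ} (h0 : 0 ≤ lam) (h1 : lam ≤ 1)
    (hΩpos : ∀ j ∈ Finset.Icc 1 dmax, 0 ≤ Ω j) : 0 ≤ rho dmax Ω lam := by
  unfold rho
  apply mul_nonneg (by norm_num)
  apply Finset.sum_nonneg
  intro j hj
  apply mul_nonneg (hΩpos j hj)
  have : (1 - 2*lam) ^ j ≤ 1 := pow_le_one_abs (abs_le.mpr ⟨by linarith, by linarith⟩) j
  linarith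

lemma rho_pos {lam : ℝ} (h0 : 0 < lam) (h1 : lam < 1)
    (hΩpos : ∀ j ∈ Finset.Icc 1 dmax, 0 ≤ Ω j)
    (hj₀ : ∃ j ∈ Finset.Icc 1 dmax, 0 < Ω j) : 0 < rho dmax Ω lam := by
  unfold rho
  apply mul_pos (by norm_num)
  apply Finset.sum_pos'
  · intro j hj
    apply mul_nonneg (hΩpos j hj)
    have : (1 - 2*lam) ^ j ≤ 1 := pow_le_one_abs (abs_le.mpr ⟨by linarith, by linarith⟩) j
    linarith
  · obtain ⟨j, hj, hΩj⟩ := hj₀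
    refine ⟨j, hj, mul_pos hΩj ?_⟩
    have hjne : j ≠ 0 := by
      have := (Finset.mem_Icc.mp hj).1; omega
    have habs : |1 - 2*lam| < 1 := abs_lt.mpr ⟨by linarith, by linarith⟩
    have : (1 - 2*lam) ^ j < 1 := by
      calc (1 - 2*lam) ^ j ≤ |(1 - 2*lam) ^ j| := le_abs_self _
      _ = |1 - 2*lam| ^ j := abs_pow _ _
      _ < 1 := pow_lt_one₀ (abs_nonneg _) habs hjne
    linarith

lemma rho_lt_one {lam : ℝ} (hmem : lam ∈ Dset dmax Ω)
    (hΩpos : ∀ j ∈ Finset.Icc 1 dmax, 0 ≤ Ω j)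
    (hΩsum : ∑ j ∈ Finset.Icc 1 dmax, Ω j = 1)
    (hj₀ : ∃ j ∈ Finset.Icc 1 dmax, 0 < Ω j) : rho dmax Ω lam < 1 := by
  obtain ⟨h0, h1⟩ := Dset_subset hmem
  have hle : ∀ j ∈ Finset.Icc 1 dmax, Ω j * (1 - (1 - 2*lam) ^ j) ≤ Ω j * 2 := by
    intro j hj
    apply mul_le_mul_of_nonneg_left _ (hΩpos j hj)
    have habs : |1 - 2*lam| ≤ 1 := abs_le.mpr ⟨by linarith, by linarith⟩
    have : -(1:ℝ) ≤ (1 - 2*lam) ^ j := by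
      have : |(1 - 2*lam) ^ j| ≤ 1 := by
        rw [abs_pow]; exact pow_le_one₀ (abs_nonneg _) habs
      have := abs_le.mp this
      linarith [this.1]
    linarith
  have hlt : ∃ j ∈ Finset.Icc 1 dmax, Ω j * (1 - (1 - 2*lam) ^ j) < Ω j * 2 := by
    rcases lt_or_eq_of_le h1 with hlt1 | heq1
    · obtain ⟨j, hj, hΩj⟩ := hj₀
      refine ⟨j, hj, ?_⟩
      apply mul_lt_mul_of_pos_left _ hΩj
      have hjne : j ≠ 0 := by have := (Finset.mem_Icc.mp hj).1; omega
      have habs : |1 - 2*lam| < 1 := abs_lt.mpr ⟨by linarith, by linarith⟩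
      have : -(1:ℝ) < (1 - 2*lam) ^ j := by
        have h' : |(1 - 2*lam) ^ j| < 1 := by
          rw [abs_pow]; exact pow_lt_one₀ (abs_nonneg _) habs hjne
        linarith [(abs_lt.mp h').1]
      linarith
    · obtain ⟨j, hj, he, hΩj⟩ := one_mem_Dset_even (heq1 ▸ hmem) hΩpos
      refine ⟨j, hj, ?_⟩
      apply mul_lt_mul_of_pos_left _ hΩj
      have hbase : (1 - 2*lam : ℝ) = -1 := by rw [heq1]; norm_num
      have : (1 - 2*lam) ^ j = 1 := by rw [hbase, he.neg_one_pow]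
      rw [this]; norm_num
  have := Finset.sum_lt_sum hle hlt
  rw [← Finset.sum_mul, hΩsum, one_mul] at this
  unfold rho
  linarith

lemma rho_strictMono {a b : ℝ} (ha : 0 ≤ a) (hab : a < b) (hb : b ≤ 1/2)
    (hΩpos : ∀ j ∈ Finset.Icc 1 dmax, 0 ≤ Ω j)
    (hj₀ : ∃ j ∈ Finset.Icc 1 dmax, 0 < Ω j) :
    rho dmax Ω a < rho dmax Ω b := by
  unfold rho
  have key : ∀ j ∈ Finset.Icc 1 dmax, j ≠ 0 → (1 - 2*b) ^ j < (1 - 2*a) ^ j := by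
    intro j _ hjne
    exact pow_lt_pow_left₀ (by linarith) (by linarith) hjne
  apply mul_lt_mul_of_pos_left _ (by norm_num : (0:ℝ) < 1/2)
  apply Finset.sum_lt_sum
  · intro j hj
    apply mul_le_mul_of_nonneg_left _ (hΩpos j hj)
    have hjne : j ≠ 0 := by have := (Finset.mem_Icc.mp hj).1; omega
    have := key j hj hjne
    linarith
  · obtain ⟨j, hj, hΩj⟩ := hj₀
    refine ⟨j, hj, ?_⟩
    apply mul_lt_mul_of_pos_left _ hΩj
    have hjne : j ≠ 0 := by have := (Finset.mem_Icc.mp hj).1; omega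
    have := key j hj hjne
    linarith

lemma rho_one_sub_le {lam : ℝ} (h : 1/2 ≤ lam)
    (hΩpos : ∀ j ∈ Finset.Icc 1 dmax, 0 ≤ Ω j) :
    rho dmax Ω (1 - lam) ≤ rho dmax Ω lam := by
  unfold rho
  apply mul_le_mul_of_nonneg_left _ (by norm_num : (0:ℝ) ≤ 1/2)
  apply Finset.sum_le_sum
  intro j hj
  apply mul_le_mul_of_nonneg_left _ (hΩpos j hj)
  have h1 : (1 - 2*(1-lam)) = -(1 - 2*lam) := by ring
  have : (1 - 2*lam) ^ j ≤ (1 - 2*(1-lam)) ^ j := by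
    rw [h1]
    calc (1 - 2*lam) ^ j ≤ |(1 - 2*lam) ^ j| := le_abs_self _
    _ = |1 - 2*lam| ^ j := abs_pow _ _
    _ = (-(1 - 2*lam)) ^ j := by rw [abs_of_nonpos (by linarith)]
  linarith

lemma rho_zero : rho dmax Ω 0 = 0 := by simp [rho]

lemma rho_half (hΩsum : ∑ j ∈ Finset.Icc 1 dmax, Ω j = 1) : rho dmax Ω (1/2) = 1/2 := by
  unfold rho
  rw [Finset.sum_congr rfl (fun j hj => ?_), hΩsum, mul_one]
  have hjne : j ≠ 0 := by have := (Finset.mem_Icc.mp hj).1; omega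
  rw [show (1 - 2*(1/2:ℝ)) = 0 by norm_num, zero_pow hjne, sub_zero, mul_one]

lemma rho_continuous : Continuous (rho dmax Ω) := by
  unfold rho
  fun_prop

lemma rho_surj (hΩsum : ∑ j ∈ Finset.Icc 1 dmax, Ω j = 1) {t : ℝ}
    (ht : t ∈ Set.Ioo (0:ℝ) (1/2)) :
    ∃ mu ∈ Set.Ioo (0:ℝ) (1/2), rho dmax Ω mu = t := by
  have h := intermediate_value_Ioo (by norm_num : (0:ℝ) ≤ 1/2)
    (rho_continuous (dmax := dmax) (Ω := Ω)).continuousOn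
  rw [rho_zero, rho_half hΩsum] at h
  obtain ⟨mu, hmu, hval⟩ := h ht
  exact ⟨mu, hmu, hval⟩

end AuxLemmas

set_option maxHeartbeats 1000000 in
/-- Lemma 2 (positivity of the growth rate derivative, stated as strict monotonicity):
the growth rate `G` is strictly increasing on `(0, 1/2)`. -/
theorem stmt_7 (dmax : ℕ) (Ω : ℕ → ℝ)
    (hΩpos : ∀ j ∈ Finset.Icc 1 dmax, 0 ≤ Ω j)
    (hΩsum : ∑ j ∈ Finset.Icc 1 dmax, Ω j = 1)
    (ri ro : ℝ) (hri : ri ∈ Set.Ioc (0 : ℝ) 1) (hro : ro ∈ Set.Ioo (0 : ℝ) 1)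
    (δ₁ δ₂ : ℝ) (h1 : 0 < δ₁) (h12 : δ₁ < δ₂) (h2 : δ₂ < 1 / 2) :
    Gr dmax Ω ri ro δ₁ < Gr dmax Ω ri ro δ₂ := by
  obtain ⟨hri0, hri1⟩ := hri
  have hδ₂0 : 0 < δ₂ := lt_trans h1 h12
  have hδ₁half : δ₁ < 1/2 := lt_trans h12 h2
  have hδ₁1 : δ₁ < 1 := by linarith
  have hδ₂1 : δ₂ < 1 := by linarith
  have h1δ₂ : (0:ℝ) < 1 - δ₂ := by linarith
  -- a positive weight exists
  have hd : ∃ j ∈ Finset.Icc 1 dmax, 0 < Ω j := by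
    have hne : ∃ j ∈ Finset.Icc 1 dmax, Ω j ≠ 0 :=
      Finset.exists_ne_zero_of_sum_ne_zero (by rw [hΩsum]; exact one_ne_zero)
    obtain ⟨j, hj, hjne⟩ := hne
    exact ⟨j, hj, lt_of_le_of_ne (hΩpos j hj) (Ne.symm hjne)⟩
  have hΔH : Hb δ₁ < Hb δ₂ := Hb_lt_Hb h1.le h12 h2.le
  obtain ⟨L, hLdef⟩ : ∃ x : ℝ, x = Real.logb 2 δ₂ - Real.logb 2 (1-δ₂) := ⟨_, rfl⟩
  obtain ⟨E, hEdef⟩ : ∃ x : ℝ, x = (Hb δ₂ - Hb δ₁) + (δ₂ - δ₁) * L := ⟨_, rfl⟩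
  have hE : 0 < E := by
    have hg := gibbs_strict h1 hδ₁1 hδ₂0 hδ₂1 (by intro h; exact absurd h (ne_of_gt h12))
    have hid : E = -(Hb δ₁ + δ₁ * Real.logb 2 δ₂ + (1-δ₁) * Real.logb 2 (1-δ₂)) := by
      rw [hEdef, hLdef]
      simp only [Hb]
      ring
    rw [hid]
    linarith
  obtain ⟨T, hTdef⟩ : ∃ x : ℝ, x = L - E / (2 * (δ₂ - δ₁)) := ⟨_, rfl⟩
  have hΔδT : (δ₂ - δ₁) * T = E / 2 - (Hb δ₂ - Hb δ₁) := by
    have hne : δ₂ - δ₁ ≠ 0 := by linarith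
    rw [hTdef]
    field_simp
    rw [hEdef]
    ring
  obtain ⟨s, hsdef⟩ : ∃ x : ℝ, x = (2:ℝ) ^ T := ⟨_, rfl⟩
  have hs : 0 < s := by rw [hsdef]; exact Real.rpow_pos_of_pos two_pos T
  have h1s : (0:ℝ) < 1 + s := by linarith
  obtain ⟨σ, hσdef⟩ : ∃ x : ℝ, x = s / (1 + s) := ⟨_, rfl⟩
  have hσ0 : 0 < σ := by rw [hσdef]; exact div_pos hs h1s
  have hσ1 : σ < 1 := by rw [hσdef]; exact (div_lt_one h1s).mpr (by linarith)
  have h1σ : (0:ℝ) < 1 - σ := by linarith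
  have hlogs : Real.logb 2 s = T := by
    rw [hsdef]
    exact Real.logb_rpow (by norm_num : (0:ℝ) < 2) (by norm_num : (2:ℝ) ≠ 1)
  have hσratio : σ / (1 - σ) = s := by
    rw [hσdef]
    field_simp
    ring
  have hTσ : Real.logb 2 σ - Real.logb 2 (1 - σ) = T := by
    rw [← Real.logb_div hσ0.ne' h1σ.ne', hσratio, hlogs]
  have hσδ₂ : σ < δ₂ := by
    have hq : (0:ℝ) < δ₂ / (1 - δ₂) := div_pos hδ₂0 h1δ₂
    have hlogq : Real.logb 2 (δ₂ / (1 - δ₂)) = L := by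
      rw [Real.logb_div hδ₂0.ne' h1δ₂.ne', hLdef]
    have hTL : T < L := by
      rw [hTdef]
      have : 0 < E / (2 * (δ₂ - δ₁)) := div_pos hE (by linarith)
      linarith
    have hsless : s < δ₂ / (1 - δ₂) := by
      have := (Real.logb_lt_logb_iff one_lt_two hs hq).mp (by rw [hlogs, hlogq]; exact hTL)
      exact this
    have hmul : s * (1 - δ₂) < δ₂ := (lt_div_iff₀ h1δ₂).mp hsless
    rw [hσdef, div_lt_iff₀ h1s]
    nlinarith
  have hσhalf : σ < 1/2 := lt_trans hσδ₂ h2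
  -- preimages of δ₂ and σ under rho
  obtain ⟨μ2, hμ2mem, hρμ2⟩ := rho_surj (dmax := dmax) (Ω := Ω) hΩsum ⟨hδ₂0, h2⟩
  obtain ⟨ν, hνmem, hρν⟩ := rho_surj (dmax := dmax) (Ω := Ω) hΩsum ⟨hσ0, hσhalf⟩
  have hνμ2 : ν < μ2 := by
    by_contra hcon
    push_neg at hcon
    rcases eq_or_lt_of_le hcon with heq | hlt
    · rw [heq] at hρμ2; rw [hρμ2] at hρν; linarith
    · have := rho_strictMono hμ2mem.1.le hlt hνmem.2.le hΩpos hd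
      rw [hρμ2, hρν] at this
      linarith
  have hHbνμ : Hb ν < Hb μ2 := Hb_lt_Hb hνmem.1.le hνμ2 hμ2mem.2.le
  obtain ⟨cb, hcbdef⟩ : ∃ x : ℝ, x = ri * (Hb μ2 - Hb ν) := ⟨_, rfl⟩
  have hcb : 0 < cb := by rw [hcbdef]; exact mul_pos hri0 (by linarith)
  obtain ⟨c, hcdef⟩ : ∃ x : ℝ, x = min (min (E/2) cb) (Hb δ₂ - Hb δ₁) := ⟨_, rfl⟩
  have hc : 0 < c := by rw [hcdef]; exact lt_min (lt_min (by linarith) hcb) (by linarith)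
  have hcE : c ≤ E/2 := by rw [hcdef]; exact le_trans (min_le_left _ _) (min_le_left _ _)
  have hccb : c ≤ cb := by rw [hcdef]; exact le_trans (min_le_left _ _) (min_le_right _ _)
  have hcΔH : c ≤ Hb δ₂ - Hb δ₁ := by rw [hcdef]; exact min_le_right _ _
  -- the pointwise comparison
  have key : ∀ lam ∈ Dset dmax Ω, ∃ mu ∈ Dset dmax Ω,
      ff dmax Ω ri δ₁ lam + (c - (Hb δ₂ - Hb δ₁)) ≤ ff dmax Ω ri δ₂ mu := by
    intro lam hlam
    obtain ⟨hl0, hl1⟩ := Dset_subset hlam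
    set r : ℝ := rho dmax Ω lam with hrdef
    have hr0 : 0 ≤ r := rho_nonneg hl0.le hl1 hΩpos
    have hr1 : r < 1 := rho_lt_one hlam hΩpos hΩsum hd
    rcases eq_or_lt_of_le hr0 with hrz | hrpos
    · -- degenerate case: rho lam = 0
      refine ⟨lam, hlam, ?_⟩
      have hzero : ff dmax Ω ri δ₁ lam = ff dmax Ω ri δ₂ lam := by
        simp only [ff, ← hrdef, ← hrz, Real.logb_zero, sub_zero, Real.logb_one]
        ring
      rw [hzero]
      linarith
    by_cases hcase : σ ≤ r
    · -- region a: use mu = lam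
      refine ⟨lam, hlam, ?_⟩
      have hff : ff dmax Ω ri δ₂ lam = ff dmax Ω ri δ₁ lam
          + (δ₂ - δ₁) * (Real.logb 2 r - Real.logb 2 (1 - r)) := by
        simp only [ff, ← hrdef]
        ring
      have hlr : Real.logb 2 σ ≤ Real.logb 2 r :=
        Real.logb_le_logb_of_le one_lt_two hσ0 hcase
      have hl1r : Real.logb 2 (1 - r) ≤ Real.logb 2 (1 - σ) :=
        Real.logb_le_logb_of_le one_lt_two (by linarith) (by linarith)
      have hmono : (δ₂ - δ₁) * T ≤ (δ₂ - δ₁) * (Real.logb 2 r - Real.logb 2 (1 - r)) := by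
        apply mul_le_mul_of_nonneg_left _ (by linarith : (0:ℝ) ≤ δ₂ - δ₁)
        rw [← hTσ]
        linarith
      rw [hff]
      linarith [hΔδT, hcE]
    · -- region b: use mu = μ2
      push_neg at hcase
      refine ⟨μ2, Ioo_subset_Dset ⟨hμ2mem.1, by linarith [hμ2mem.2]⟩, ?_⟩
      set lam' : ℝ := min lam (1 - lam) with hlam'def
      have hlam'0 : 0 ≤ lam' := le_min hl0.le (by linarith)
      have hlam'half : lam' ≤ 1/2 := by
        rcases le_total lam (1/2) with h | h
        · exact le_trans (min_le_left _ _) h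
        · exact le_trans (min_le_right _ _) (by linarith)
      have hHb' : Hb lam' = Hb lam := by
        rcases le_total lam (1 - lam) with h | h
        · rw [hlam'def, min_eq_left h]
        · rw [hlam'def, min_eq_right h, Hb_one_sub]
      have hρ' : rho dmax Ω lam' ≤ r := by
        rcases le_total lam (1/2) with h | h
        · rw [hlam'def, min_eq_left (by linarith)]
        · rw [hlam'def, min_eq_right (by linarith)]
          exact rho_one_sub_le h hΩpos
      have hlam'ν : lam' ≤ ν := by
        by_contra hlt
        push_neg at hlt
        have := rho_strictMono hνmem.1.le hlt hlam'half hΩpos hd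
        rw [hρν] at this
        linarith
      have hHblam : Hb lam ≤ Hb ν := by
        rw [← hHb']
        exact Hb_le_Hb hlam'0 hlam'ν hνmem.2.le
      have hg : Hb δ₁ + δ₁ * Real.logb 2 r + (1 - δ₁) * Real.logb 2 (1 - r) ≤ 0 :=
        gibbs h1 hδ₁1 hrpos hr1
      have hff1 : ff dmax Ω ri δ₁ lam
          = ri * Hb lam + δ₁ * Real.logb 2 r + (1 - δ₁) * Real.logb 2 (1 - r) := by
        simp only [ff, ← hrdef]
      have hff2 : ff dmax Ω ri δ₂ μ2
          = ri * Hb μ2 + δ₂ * Real.logb 2 δ₂ + (1 - δ₂) * Real.logb 2 (1 - δ₂) := by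
        simp only [ff, hρμ2]
      have hHδ₂ : δ₂ * Real.logb 2 δ₂ + (1 - δ₂) * Real.logb 2 (1 - δ₂) = -Hb δ₂ := by
        simp only [Hb]; ring
      have hmul : ri * Hb lam ≤ ri * Hb ν := mul_le_mul_of_nonneg_left hHblam hri0.le
      have hcb' : ri * (Hb μ2 - Hb ν) = ri * Hb μ2 - ri * Hb ν := by ring
      rw [hff1, hff2]
      have hccb' : c ≤ ri * Hb μ2 - ri * Hb ν := by
        rw [← hcb']; rw [hcbdef] at hccb; exact hccb
      linarith
  -- boundedness and nonemptiness of the images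
  have hbdd : BddAbove (ff dmax Ω ri δ₂ '' Dset dmax Ω) := by
    refine ⟨ri, ?_⟩
    rintro y ⟨lam, hlam, rfl⟩
    obtain ⟨hl0, hl1⟩ := Dset_subset hlam
    have hr0 : 0 ≤ rho dmax Ω lam := rho_nonneg hl0.le hl1 hΩpos
    have hr1 : rho dmax Ω lam < 1 := rho_lt_one hlam hΩpos hΩsum hd
    have e1 : Real.logb 2 (rho dmax Ω lam) ≤ 0 := Real.logb_nonpos one_lt_two hr0 hr1.le
    have e2 : Real.logb 2 (1 - rho dmax Ω lam) ≤ 0 :=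
      Real.logb_nonpos one_lt_two (by linarith) (by linarith)
    have e3 : ri * Hb lam ≤ ri := by
      have := mul_le_mul_of_nonneg_left (Hb_le_one lam) hri0.le
      linarith
    have t1 : δ₂ * Real.logb 2 (rho dmax Ω lam) ≤ 0 := by
      have := mul_le_mul_of_nonneg_left e1 hδ₂0.le
      simpa using this
    have t2 : (1 - δ₂) * Real.logb 2 (1 - rho dmax Ω lam) ≤ 0 := by
      have := mul_le_mul_of_nonneg_left e2 h1δ₂.le
      simpa using this
    simp only [ff]
    linarith
  have hSne : (ff dmax Ω ri δ₁ '' Dset dmax Ω).Nonempty :=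
    ⟨_, Set.mem_image_of_mem _ (Ioo_subset_Dset (by norm_num : (1/2:ℝ) ∈ Set.Ioo 0 1))⟩
  have key' : ∀ x ∈ ff dmax Ω ri δ₁ '' Dset dmax Ω,
      ∃ y ∈ ff dmax Ω ri δ₂ '' Dset dmax Ω, x + (c - (Hb δ₂ - Hb δ₁)) ≤ y := by
    rintro x ⟨lam, hlam, rfl⟩
    obtain ⟨mu, hmu, hle⟩ := key lam hlam
    exact ⟨ff dmax Ω ri δ₂ mu, Set.mem_image_of_mem _ hmu, hle⟩
  have hsup := csSup_add_le hSne hbdd (c - (Hb δ₂ - Hb δ₁)) key'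
  have hfmax : fmax dmax Ω ri δ₁ + (c - (Hb δ₂ - Hb δ₁)) ≤ fmax dmax Ω ri δ₂ := hsup
  simp only [Gr]
  linarith
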